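/- Let T : F_{q^m} → F_{q^m} be an F_q-linear map and let C = im(T) ⊆ F_{q^m}, with dual taken with respect to the nondegenerate trace bilinear form ⟨a,b⟩ = Tr_{F_{q^m}/F_q}(ab). Fix an F_q-basis e_1,…,e_m of F_{q^m} and let G_T be the m×m matrix over F_q with entries (G_T)_{ij} = Tr_{F_{q^m}/F_q}(T(e_i)·T(e_j)). Then dim_{F_q}(C ∩ C^⊥) = rank(T) − rank(G_T). -/

import Mathlib

/-- Master hull–rank theorem: for an `F_q`-linear map `T` on `F_{q^m}` with image code
`C = im T`, the hull dimension equals `rank T - rank G_T`, where `G_T` is the Gram matrix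
of the trace form pulled back along `T` in a fixed basis. -/
theorem stmt0 (K L : Type*) [Field K] [Fintype K] [Field L] [Fintype L] [Algebra K L]
    (m : ℕ) (e : Module.Basis (Fin m) K L) (T : L →ₗ[K] L)
    (G : Matrix (Fin m) (Fin m) K)
    (hG : ∀ i j, G i j = Algebra.trace K L (T (e i) * T (e j))) :
    Module.finrank K ↥(LinearMap.range T ⊓
        (Algebra.traceForm K L).orthogonal (LinearMap.range T)) =
      Module.finrank K ↥(LinearMap.range T) - G.rank := by
  set B := Algebra.traceForm K L with hB
  set g : L →ₗ[K] Module.Dual K L := T.dualMap ∘ₗ B with hg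
  set ψ : L →ₗ[K] Module.Dual K L := g ∘ₗ T with hψ
  set C := LinearMap.range T with hC
  -- ker g = orthogonal C
  have hker : LinearMap.ker g = B.orthogonal C := by
    ext x
    simp only [LinearMap.mem_ker, LinearMap.BilinForm.mem_orthogonal_iff]
    constructor
    · intro h n hn
      obtain ⟨y, rfl⟩ := hn
      have := congrFun (congrArg DFunLike.coe h) y
      rw [hB]
      simpa [hg, hB, Algebra.traceForm_apply, mul_comm] using this
    · intro h
      ext y
      have := h (T y) ⟨y, rfl⟩
      rw [hB] at this
      simpa [hg, hB, Algebra.traceForm_apply, mul_comm] using this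
  -- G is the matrix of ψ
  have hGm : G = LinearMap.toMatrix e e.dualBasis ψ := by
    ext i j
    rw [LinearMap.toMatrix_apply, Module.Basis.dualBasis_repr]
    have : ψ (e j) (e i) = Algebra.trace K L (T (e j) * T (e i)) := rfl
    rw [this, hG, ← hG j i, mul_comm] at *
    rw [hG, mul_comm]
  have hGrank : G.rank = Module.finrank K ↥(LinearMap.range ψ) := by
    rw [hGm, Matrix.rank_eq_finrank_range_toLin _ e.dualBasis e, Matrix.toLin_toMatrix]
  -- range ψ = C.map g
  have hrange : LinearMap.range ψ = C.map g := by
    rw [hψ, LinearMap.range_comp]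
  -- rank-nullity on g restricted to C
  have hrn := LinearMap.finrank_range_add_finrank_ker (g.domRestrict C)
  rw [LinearMap.range_domRestrict, LinearMap.ker_domRestrict] at hrn
  have h1 : Module.finrank K ↥((LinearMap.ker g).comap C.subtype) =
      Module.finrank K ↥(C ⊓ LinearMap.ker g) := by
    rw [← Submodule.finrank_map_subtype_eq C, Submodule.map_comap_subtype]
  rw [h1, hker] at hrn
  rw [hGrank, hrange]
  omega
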